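/- For a partition α = (α_1, ..., α_n), the Schur polynomial in n variables satisfies the bialternant formula: s_α(x_1,...,x_n) · det(x_j^{n-i})_{i,j=1}^n = det(x_j^{α_i + n - i})_{i,j=1}^n. -/

import Mathlib

open MvPolynomial

/-- Complete homogeneous symmetric polynomial in `n` variables, indexed by an
integer, with the convention `h_k = 0` for `k < 0` and `h_0 = 1`. -/
noncomputable def hInt (n : ℕ) (k : ℤ) : MvPolynomial (Fin n) ℤ :=
  if 0 ≤ k then hsymm (Fin n) ℤ k.toNat else 0

/-- The Schur polynomial of `α` in `n` variables, defined via the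
Jacobi–Trudi determinant `s_α = det (h_{α_i - i + j})_{i,j}`. -/
noncomputable def schur (n : ℕ) (α : Fin n → ℕ) : MvPolynomial (Fin n) ℤ :=
  Matrix.det (Matrix.of fun i j : Fin n => hInt n ((α i : ℤ) - (i : ℕ) + (j : ℕ)))

/-- A symmetric polynomial is Schur positive if it is a nonnegative integer
combination of Schur polynomials of partitions. -/
def SchurPositive (n : ℕ) (f : MvPolynomial (Fin n) ℤ) : Prop :=
  ∃ c : (Fin n → ℕ) →₀ ℕ, (∀ lam ∈ c.support, Antitone lam) ∧
    f = c.sum fun lam k => (k : ℤ) • schur n lam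

noncomputable section SchurAux
open Finset


namespace SchurAux

variable {A : Type*} [CommRing A]

def geom (x : A) : PowerSeries A := PowerSeries.mk fun m => x ^ m

lemma one_sub_mul_geom (x : A) : (1 - PowerSeries.C x * PowerSeries.X) * geom x = 1 := by
  ext m
  rw [sub_mul, one_mul, mul_assoc]
  cases m with
  | zero => simp [geom]
  | succ m =>
    simp [geom, PowerSeries.coeff_C_mul, PowerSeries.coeff_succ_X_mul, pow_succ, mul_comm]

variable {σ : Type*} [Fintype σ] [DecidableEq σ]

def Es (s : Finset σ) : PowerSeries (MvPolynomial σ ℤ) :=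
  ∏ i ∈ s, (1 - PowerSeries.C (X i) * PowerSeries.X)

def Hs (s : Finset σ) : PowerSeries (MvPolynomial σ ℤ) :=
  ∏ i ∈ s, geom (X i)

omit [Fintype σ] in
lemma Es_insert {a : σ} {s : Finset σ} (ha : a ∉ s) :
    Es (insert a s) = Es s - PowerSeries.C (X a) * (PowerSeries.X * Es s) := by
  rw [Es, Es, Finset.prod_insert ha]; ring

omit [Fintype σ] in
lemma Hs_insert {a : σ} {s : Finset σ} (ha : a ∉ s) :
    Hs (insert a s) = geom (X a) * Hs s := by
  rw [Hs, Hs, Finset.prod_insert ha]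

omit [Fintype σ] in
lemma Es_mul_Hs (s : Finset σ) : Es s * Hs s = 1 := by
  rw [Es, Hs, ← Finset.prod_mul_distrib]
  exact Finset.prod_eq_one fun i _ => one_sub_mul_geom (X i)

lemma Es_erase_mul_Hs (j : σ) : Es (univ.erase j) * Hs univ = geom (X j) := by
  have h1 : Hs (univ : Finset σ) = geom (X j) * Hs (univ.erase j) := by
    rw [Hs, Hs, ← Finset.mul_prod_erase _ _ (mem_univ j)]
  rw [h1, mul_comm (geom (X j)), ← mul_assoc, Es_mul_Hs, one_mul]

omit [Fintype σ] in
lemma coeff_Es_eq_zero {s : Finset σ} {k : ℕ} (h : s.card < k) :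
    PowerSeries.coeff k (Es s) = 0 := by
  induction s using Finset.induction_on generalizing k with
  | empty =>
    simp only [Finset.card_empty] at h
    rw [Es, Finset.prod_empty, PowerSeries.coeff_one, if_neg (by omega)]
  | @insert a s ha ih =>
    rw [Es_insert ha, map_sub, PowerSeries.coeff_C_mul]
    rw [Finset.card_insert_of_notMem ha] at h
    obtain ⟨k, rfl⟩ := Nat.exists_eq_succ_of_ne_zero (by omega : k ≠ 0)
    rw [PowerSeries.coeff_succ_X_mul, ih (by omega), ih (by omega), mul_zero, sub_zero]

omit [Fintype σ] in
lemma coeff_Hs (s : Finset σ) (m : ℕ) :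
    PowerSeries.coeff m (Hs s) = ∑ μ ∈ s.sym m, (μ.1.map X).prod := by
  induction s using Finset.induction_on generalizing m with
  | empty =>
    rw [Hs, Finset.prod_empty]
    cases m with
    | zero =>
      rw [Finset.sym_zero]
      simp
      rfl
    | succ m => simp
  | @insert a s ha ih =>
    rw [Hs_insert ha, PowerSeries.coeff_mul,
      Finset.Nat.sum_antidiagonal_eq_sum_range_succ_mk]
    simp only [geom, PowerSeries.coeff_mk]
    calc ∑ k ∈ range (m + 1), X a ^ k * PowerSeries.coeff (m - k) (Hs s)
        = ∑ k ∈ range (m + 1), X a ^ k * ∑ μ ∈ s.sym (m - k), (μ.1.map X).prod := by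
          simp_rw [ih]
      _ = ∑ i : Fin (m + 1), ∑ μ : s.sym (m - (i : ℕ)),
            X a ^ (i : ℕ) * ((μ : Sym σ (m - (i : ℕ))).1.map X).prod := by
          rw [Fin.sum_univ_eq_sum_range
            (fun k => ∑ μ : s.sym (m - k), X a ^ k * ((μ : Sym σ (m - k)).1.map X).prod)]
          refine Finset.sum_congr rfl fun k _ => ?_
          rw [Finset.mul_sum]
          exact (Finset.sum_coe_sort (s.sym (m - k))
            (fun μ => X a ^ k * (Multiset.map X μ.1).prod)).symm
      _ = ∑ p : Σ i : Fin (m + 1), {x // x ∈ s.sym (m - (i : ℕ))},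
            X a ^ (p.1 : ℕ) * ((p.2 : Sym σ (m - (p.1 : ℕ))).1.map X).prod := by
          rw [← Finset.univ_sigma_univ, Finset.sum_sigma]
      _ = ∑ μ : {x // x ∈ (insert a s).sym m}, ((μ : Sym σ m).1.map X).prod := by
          refine Fintype.sum_equiv (Finset.symInsertEquiv ha).symm _ _ fun p => ?_
          simp only [Finset.symInsertEquiv_symm_apply_coe]
          simp [Sym.coe_fill, Sym.coe_replicate, Multiset.prod_replicate, mul_comm]
      _ = ∑ μ ∈ (insert a s).sym m, (μ.1.map X).prod := by
          exact Finset.sum_coe_sort ((insert a s).sym m)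
            (fun μ => (Multiset.map X μ.1).prod)


lemma coeff_Hs_univ (m : ℕ) :
    PowerSeries.coeff m (Hs (univ : Finset σ)) = hsymm σ ℤ m := by
  rw [coeff_Hs, Finset.sym_univ, hsymm]

end SchurAux

end SchurAux

section MainAux
open Finset SchurAux

lemma hInt_ofNat (n m : ℕ) : hInt n (m : ℤ) = hsymm (Fin n) ℤ m := by
  rw [hInt, if_pos (by positivity), Int.toNat_natCast]

lemma hInt_neg {n : ℕ} {k : ℤ} (h : k < 0) : hInt n k = 0 := by
  rw [hInt, if_neg (by omega)]

lemma key (n : ℕ) (c : ℕ) (j : Fin n) :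
    ∑ k : Fin n, hInt n ((c : ℤ) - (k : ℕ)) *
      PowerSeries.coeff (k : ℕ) (Es (univ.erase j)) =
    (X j : MvPolynomial (Fin n) ℤ) ^ c := by
  set g : ℕ → MvPolynomial (Fin n) ℤ := fun k =>
    hInt n ((c : ℤ) - k) * PowerSeries.coeff k (Es (univ.erase j)) with hg
  have hn : 0 < n := j.pos
  have hcard : (univ.erase j).card = n - 1 := by
    rw [Finset.card_erase_of_mem (mem_univ j), Finset.card_univ, Fintype.card_fin]
  have hzero1 : ∀ k, n ≤ k → g k = 0 := fun k hk => by
    rw [hg]; dsimp only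
    rw [coeff_Es_eq_zero (by rw [hcard]; omega : (univ.erase j).card < k), mul_zero]
  have hzero2 : ∀ k, c < k → g k = 0 := fun k hk => by
    rw [hg]; dsimp only
    rw [hInt_neg (by omega), zero_mul]
  have h1 : ∑ k : Fin n, g k = ∑ k ∈ range n, g k := by
    exact Fin.sum_univ_eq_sum_range g n
  have h2 : ∑ k ∈ range n, g k = ∑ k ∈ range (max n (c + 1)), g k := by
    refine Finset.sum_subset (Finset.range_subset_range.mpr (le_max_left _ _)) ?_
    intro k _ hk
    rw [Finset.mem_range] at hk
    exact hzero1 k (by omega)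
  have h3 : ∑ k ∈ range (c + 1), g k = ∑ k ∈ range (max n (c + 1)), g k := by
    refine Finset.sum_subset (Finset.range_subset_range.mpr (le_max_right _ _)) ?_
    intro k _ hk
    rw [Finset.mem_range] at hk
    exact hzero2 k (by omega)
  calc ∑ k : Fin n, g k = ∑ k ∈ range (c + 1), g k := by rw [h1, h2, ← h3]
    _ = ∑ k ∈ range (c + 1),
        PowerSeries.coeff k (Es (univ.erase j)) * hsymm (Fin n) ℤ (c - k) := by
        refine Finset.sum_congr rfl fun k hk => ?_
        rw [Finset.mem_range] at hk
        rw [hg]; dsimp only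
        have hcast : ((c : ℤ) - k) = ((c - k : ℕ) : ℤ) := by omega
        rw [hcast, hInt_ofNat, mul_comm]
    _ = ∑ k ∈ range (c + 1), PowerSeries.coeff k (Es (univ.erase j)) *
          PowerSeries.coeff (c - k) (Hs (univ : Finset (Fin n))) := by
        simp_rw [coeff_Hs_univ]
    _ = PowerSeries.coeff c (Es (univ.erase j) * Hs (univ : Finset (Fin n))) := by
        rw [PowerSeries.coeff_mul, Finset.Nat.sum_antidiagonal_eq_sum_range_succ_mk]
    _ = (X j : MvPolynomial (Fin n) ℤ) ^ c := by rw [Es_erase_mul_Hs]; simp [geom]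


lemma det_mul_det (n : ℕ) (α : Fin n → ℕ) :
    (Matrix.of fun i k : Fin n =>
        hInt n (((α i + (n - 1 - (i : ℕ)) : ℕ) : ℤ) - (k : ℕ))).det *
    (Matrix.of fun k j : Fin n => PowerSeries.coeff (k : ℕ) (Es (univ.erase j))).det =
    (Matrix.of fun i j : Fin n =>
        (X j : MvPolynomial (Fin n) ℤ) ^ (α i + (n - 1 - (i : ℕ)))).det := by
  rw [← Matrix.det_mul]
  congr 1
  apply Matrix.ext
  intro i j
  rw [Matrix.mul_apply]
  exact key n (α i + (n - 1 - (i : ℕ))) j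

lemma detH (n : ℕ) (α : Fin n → ℕ) :
    (Matrix.of fun i k : Fin n =>
        hInt n (((α i + (n - 1 - (i : ℕ)) : ℕ) : ℤ) - (k : ℕ))).det =
    ((Equiv.Perm.sign (Fin.revPerm (n := n)) : ℤ) : MvPolynomial (Fin n) ℤ) * schur n α := by
  have h : (Matrix.of fun i k : Fin n =>
      hInt n (((α i + (n - 1 - (i : ℕ)) : ℕ) : ℤ) - (k : ℕ))) =
      (Matrix.of fun i j : Fin n =>
        hInt n ((α i : ℤ) - (i : ℕ) + (j : ℕ))).submatrix id Fin.revPerm := by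
    refine Matrix.ext fun i k => ?_
    simp only [Matrix.submatrix_apply, Matrix.of_apply, id_eq, Fin.revPerm_apply]
    have hi := i.isLt
    have hk := k.isLt
    congr 1
    rw [Fin.val_rev]
    omega
  rw [h, Matrix.det_permute', schur]

lemma schur_zero (n : ℕ) : schur n (fun _ => 0) = 1 := by
  rw [schur, Matrix.det_of_upperTriangular]
  · refine Finset.prod_eq_one fun i _ => ?_
    rw [Matrix.of_apply]
    have : ((0 : ℕ) : ℤ) - (i : ℕ) + (i : ℕ) = ((0 : ℕ) : ℤ) := by ring
    rw [this, hInt_ofNat, hsymm_zero]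
  · intro i j hij
    rw [Matrix.of_apply]
    have hji : (j : ℕ) < (i : ℕ) := hij
    exact hInt_neg (by omega)


/-- The bialternant formula:
`s_α(x) · det(x_j^{n-i}) = det(x_j^{α_i + n - i})`. -/
theorem schur_bialternant (n : ℕ) (α : Fin n → ℕ) (hα : Antitone α) :
    schur n α *
      Matrix.det (Matrix.of fun i j : Fin n =>
        (X j : MvPolynomial (Fin n) ℤ) ^ (n - 1 - (i : ℕ))) =
    Matrix.det (Matrix.of fun i j : Fin n =>
      (X j : MvPolynomial (Fin n) ℤ) ^ (α i + (n - 1 - (i : ℕ)))) := by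
  classical
  set ε : MvPolynomial (Fin n) ℤ :=
    ((Equiv.Perm.sign (Fin.revPerm (n := n)) : ℤ) : MvPolynomial (Fin n) ℤ) with hε
  set Bdet := (Matrix.of fun k j : Fin n =>
      PowerSeries.coeff (k : ℕ) (Es (univ.erase j))).det with hB
  have hV : ε * Bdet = Matrix.det (Matrix.of fun i j : Fin n =>
      (X j : MvPolynomial (Fin n) ℤ) ^ (n - 1 - (i : ℕ))) := by
    have h := det_mul_det n (fun _ => 0)
    rw [detH, schur_zero, mul_one] at h
    simpa using h
  calc schur n α * Matrix.det (Matrix.of fun i j : Fin n =>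
        (X j : MvPolynomial (Fin n) ℤ) ^ (n - 1 - (i : ℕ)))
      = schur n α * (ε * Bdet) := by rw [hV]
    _ = (ε * schur n α) * Bdet := by ring
    _ = (Matrix.of fun i k : Fin n =>
          hInt n (((α i + (n - 1 - (i : ℕ)) : ℕ) : ℤ) - (k : ℕ))).det * Bdet := by
        rw [detH]
    _ = _ := det_mul_det n α


end MainAux
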